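/- Let L > 0, D > 0, b₂ > 0, b₁ ∈ ℝ, and let p₀ be a continuous function on [0,L]. Then there exist constants c₀, c₁, C > 0 such that for every twice continuously differentiable function w on [0,L] with w(0) = 0 and every continuous function v on [0,L], one has c₀·Ê(w,v) − C ≤ 𝓔(w,v) ≤ c₁·Ê(w,v) + C, where Ê(w,v) = (1/2)(D‖w''‖² + ‖v‖²) + (b₂/4)‖w'‖⁴ and 𝓔(w,v) = (1/2)(D‖w''‖² + ‖v‖²) + (b₂/4)‖w'‖⁴ − (b₁/2)‖w'‖² − ∫₀^L p₀(x) w(x) dx. -/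

import Mathlib

open MeasureTheory intervalIntegral

/-- The full nonlinear beam energy `𝓔` is equivalent (up to additive constants)
to the positive nonlinear energy `Ê`. -/
theorem nonlinear_energy_equivalence (L D b₂ b₁ : ℝ) (hL : 0 < L) (hD : 0 < D)
    (hb₂ : 0 < b₂) (p₀ : ℝ → ℝ) (hp₀ : ContinuousOn p₀ (Set.Icc 0 L)) :
    ∃ c₀ c₁ C : ℝ, 0 < c₀ ∧ 0 < c₁ ∧ 0 < C ∧
      ∀ w v : ℝ → ℝ, ContDiff ℝ 2 w → w 0 = 0 → ContinuousOn v (Set.Icc 0 L) →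
        (c₀ * ((1/2) * (D * (∫ x in (0:ℝ)..L, (deriv (deriv w) x) ^ 2)
                + ∫ x in (0:ℝ)..L, (v x) ^ 2)
              + (b₂/4) * (∫ x in (0:ℝ)..L, (deriv w x) ^ 2) ^ 2) - C
          ≤ (1/2) * (D * (∫ x in (0:ℝ)..L, (deriv (deriv w) x) ^ 2)
                + ∫ x in (0:ℝ)..L, (v x) ^ 2)
              + (b₂/4) * (∫ x in (0:ℝ)..L, (deriv w x) ^ 2) ^ 2
              - (b₁/2) * (∫ x in (0:ℝ)..L, (deriv w x) ^ 2)
              - ∫ x in (0:ℝ)..L, p₀ x * w x)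
        ∧ ((1/2) * (D * (∫ x in (0:ℝ)..L, (deriv (deriv w) x) ^ 2)
                + ∫ x in (0:ℝ)..L, (v x) ^ 2)
              + (b₂/4) * (∫ x in (0:ℝ)..L, (deriv w x) ^ 2) ^ 2
              - (b₁/2) * (∫ x in (0:ℝ)..L, (deriv w x) ^ 2)
              - (∫ x in (0:ℝ)..L, p₀ x * w x)
          ≤ c₁ * ((1/2) * (D * (∫ x in (0:ℝ)..L, (deriv (deriv w) x) ^ 2)
                + ∫ x in (0:ℝ)..L, (v x) ^ 2)
              + (b₂/4) * (∫ x in (0:ℝ)..L, (deriv w x) ^ 2) ^ 2) + C) := by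
  obtain ⟨M, hM⟩ := isCompact_Icc.exists_bound_of_continuousOn hp₀
  set M' : ℝ := max M 0 with hM'def
  have hM'0 : 0 ≤ M' := le_max_right _ _
  have hM'b : ∀ x ∈ Set.Icc (0:ℝ) L, |p₀ x| ≤ M' := fun x hx => by
    have := hM x hx
    rw [Real.norm_eq_abs] at this
    exact this.trans (le_max_left _ _)
  have hL' : (0:ℝ) ≤ L := hL.le
  -- elementary AM-GM fact
  have key : ∀ a s : ℝ, a * s ≤ b₂/8 * s^2 + 2*a^2/b₂ := by
    intro a s
    have h := div_nonneg (sq_nonneg (b₂*s - 4*a)) (by linarith : (0:ℝ) ≤ 8*b₂)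
    have he : (b₂*s - 4*a)^2/(8*b₂) = b₂/8 * s^2 + 2*a^2/b₂ - a*s := by
      field_simp; ring
    rw [he] at h; linarith
  refine ⟨1/2, 3/2, 2*(|b₁|/2 + M'*L/2)^2/b₂ + M'*L^2/2 + 1, by norm_num, by norm_num, ?_, ?_⟩
  · have h1 : 0 ≤ 2*(|b₁|/2 + M'*L/2)^2/b₂ := div_nonneg (by positivity) hb₂.le
    have h2 : 0 ≤ M'*L^2/2 := by positivity
    linarith
  intro w v hw hw0 hv
  have hcw : Continuous w := hw.continuous
  have hdw : Differentiable ℝ w := hw.differentiable (by norm_num)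
  have hcw1 : Continuous (deriv w) := hw.continuous_deriv (by norm_num)
  set I2 := ∫ x in (0:ℝ)..L, (deriv (deriv w) x) ^ 2 with hI2def
  set Iv := ∫ x in (0:ℝ)..L, (v x) ^ 2 with hIvdef
  set t := ∫ x in (0:ℝ)..L, (deriv w x) ^ 2 with htdef
  set Ip := ∫ x in (0:ℝ)..L, p₀ x * w x with hIpdef
  have hI2 : 0 ≤ I2 := intervalIntegral.integral_nonneg hL' (fun x _ => sq_nonneg _)
  have hIv : 0 ≤ Iv := intervalIntegral.integral_nonneg hL' (fun x _ => sq_nonneg _)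
  have ht : 0 ≤ t := intervalIntegral.integral_nonneg hL' (fun x _ => sq_nonneg _)
  -- pointwise bound on |w|
  have hbw : ∀ x ∈ Set.Icc (0:ℝ) L, |w x| ≤ (L + t)/2 := by
    intro x hx
    obtain ⟨hx0, hxL⟩ := hx
    have hftc : ∫ u in (0:ℝ)..x, deriv w u = w x - w 0 :=
      intervalIntegral.integral_deriv_eq_sub (fun y _ => hdw y) (hcw1.intervalIntegrable 0 x)
    rw [hw0, sub_zero] at hftc
    have h1 : |w x| ≤ ∫ u in (0:ℝ)..x, |deriv w u| := by
      rw [← hftc]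
      exact intervalIntegral.abs_integral_le_integral_abs hx0
    have h2 : ∫ u in (0:ℝ)..x, |deriv w u| ≤ ∫ u in (0:ℝ)..x, (1 + (deriv w u)^2)/2 := by
      apply intervalIntegral.integral_mono_on hx0 (hcw1.abs.intervalIntegrable 0 x)
        (Continuous.intervalIntegrable (by continuity) 0 x)
      intro u _
      nlinarith [sq_nonneg (|deriv w u| - 1), sq_abs (deriv w u), abs_nonneg (deriv w u)]
    have h3 : ∫ u in (0:ℝ)..x, (1 + (deriv w u)^2)/2 ≤ ∫ u in (0:ℝ)..L, (1 + (deriv w u)^2)/2 := by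
      apply intervalIntegral.integral_mono_interval le_rfl hx0 hxL
      · exact Filter.Eventually.of_forall (fun u => by positivity)
      · exact Continuous.intervalIntegrable (by continuity) 0 L
    have h4 : ∫ u in (0:ℝ)..L, (1 + (deriv w u)^2)/2 = (L + t)/2 := by
      rw [intervalIntegral.integral_div,
        intervalIntegral.integral_add (g := fun x => deriv w x ^ 2) intervalIntegrable_const
          ((hcw1.pow 2).intervalIntegrable 0 L),
        intervalIntegral.integral_const, ← htdef]
      simp
    linarith
  -- bound on the load term
  have hIpint : IntervalIntegrable (fun x => p₀ x * w x) volume 0 L := by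
    apply ContinuousOn.intervalIntegrable
    rw [Set.uIcc_of_le hL']
    exact hp₀.mul hcw.continuousOn
  have hIp : |Ip| ≤ L * (M' * ((L+t)/2)) := by
    rw [hIpdef]
    calc |∫ x in (0:ℝ)..L, p₀ x * w x| ≤ ∫ x in (0:ℝ)..L, |p₀ x * w x| :=
          intervalIntegral.abs_integral_le_integral_abs hL'
      _ ≤ ∫ x in (0:ℝ)..L, M' * ((L+t)/2) := by
          apply intervalIntegral.integral_mono_on hL' hIpint.abs intervalIntegrable_const
          intro x hx
          rw [abs_mul]
          exact mul_le_mul (hM'b x hx) (hbw x hx) (abs_nonneg _) hM'0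
      _ = L * (M' * ((L+t)/2)) := by
          rw [intervalIntegral.integral_const, smul_eq_mul, sub_zero]
  have hIp1 : Ip ≤ L * (M' * ((L+t)/2)) := (abs_le.mp hIp).2
  have hIp2 : -(L * (M' * ((L+t)/2))) ≤ Ip := (abs_le.mp hIp).1
  have hAt : (|b₁|/2 + M'*L/2) * t ≤ b₂/8 * t^2 + 2*(|b₁|/2 + M'*L/2)^2/b₂ :=
    key (|b₁|/2 + M'*L/2) t
  have h1 : b₁ * t ≤ |b₁| * t := mul_le_mul_of_nonneg_right (le_abs_self b₁) ht
  have h1' : -(|b₁| * t) ≤ b₁ * t := by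
    have := mul_le_mul_of_nonneg_right (neg_abs_le b₁) ht
    linarith
  have hDI : 0 ≤ D * I2 := mul_nonneg hD.le hI2
  constructor
  · linarith [hAt, hIp1, h1, hDI, hIv, ht]
  · linarith [hAt, hIp2, h1', hDI, hIv, ht]
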